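/- Let δ₁, δ₂, e₁, e₂ be real numbers with 0 < δ₁ < δ₂, 0 < e₁ < e₂, e₁ < δ₁, e₂ < δ₂, δ₁ + δ₂ ≤ π/2, and e₂/δ₂ < e₁/δ₁. Then sin(δ₂ + δ₁)/sin(δ₂ − δ₁) < sin(e₂ + e₁)/sin(e₂ − e₁). -/

import Mathlib

open Real

/-- For `0 < u < v ≤ π`, `u * sin v < v * sin u` (concavity of sin on `[0, π]`). -/
lemma sin_ratio_aux {u v : ℝ} (hu : 0 < u) (huv : u < v) (hv : v ≤ π) :
    u * Real.sin v < v * Real.sin u := by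
  have hvpos : 0 < v := hu.trans huv
  have h0 : (0 : ℝ) ∈ Set.Icc 0 π := ⟨le_rfl, Real.pi_pos.le⟩
  have hvmem : v ∈ Set.Icc (0:ℝ) π := ⟨hvpos.le, hv⟩
  have hne : (0 : ℝ) ≠ v := hvpos.ne
  have ha : 0 < 1 - u / v := by
    have : u / v < 1 := (div_lt_one hvpos).2 huv
    linarith
  have hb : 0 < u / v := div_pos hu hvpos
  have hab : (1 - u / v) + u / v = 1 := by ring
  have := strictConcaveOn_sin_Icc.2 h0 hvmem hne ha hb hab
  have hsmul : (1 - u / v) • (0:ℝ) + (u / v) • v = u := by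
    rw [smul_eq_mul, smul_eq_mul, mul_zero, zero_add]
    exact div_mul_cancel₀ u hvpos.ne'
  rw [hsmul] at this
  simp only [Real.sin_zero, smul_eq_mul, mul_zero, zero_add] at this
  -- this : u / v * sin v < sin u
  have := (div_lt_iff₀ hvpos).1 (by rwa [div_mul_eq_mul_div] at this)
  nlinarith [this]

/-- For fixed `c ∈ (0,1)`, `x ↦ sin (c*x) / sin x` is strictly increasing on `(0, π/2]`. -/
lemma sin_ratio_strictMono {c : ℝ} (hc0 : 0 < c) (hc1 : c < 1) :
    StrictMonoOn (fun x => Real.sin (c * x) / Real.sin x) (Set.Ioc 0 (π / 2)) := by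
  apply strictMonoOn_of_deriv_pos (convex_Ioc 0 (π / 2))
  · apply ContinuousOn.div
    · exact (Real.continuous_sin.comp (continuous_const.mul continuous_id)).continuousOn
    · exact Real.continuous_sin.continuousOn
    · intro x hx
      exact (Real.sin_pos_of_pos_of_lt_pi hx.1
        (lt_of_le_of_lt hx.2 (by linarith [Real.pi_pos]))).ne'
  · intro x hx
    rw [interior_Ioc] at hx
    obtain ⟨hx0, hx2⟩ := hx
    have hxpi : x < π := hx2.trans (by linarith [Real.pi_pos])
    have hsx : 0 < Real.sin x := Real.sin_pos_of_pos_of_lt_pi hx0 hxpi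
    have h1 : HasDerivAt (fun x : ℝ => Real.sin (c * x)) (Real.cos (c * x) * c) x := by
      simpa using ((hasDerivAt_id x).const_mul c).sin
    have h2 : HasDerivAt (fun x => Real.sin (c * x) / Real.sin x)
        ((Real.cos (c * x) * c * Real.sin x - Real.sin (c * x) * Real.cos x) /
          (Real.sin x) ^ 2) x := h1.div (Real.hasDerivAt_sin x) hsx.ne'
    rw [h2.deriv]
    apply div_pos _ (pow_pos hsx 2)
    -- key : c * cos (c*x) * sin x - sin (c*x) * cos x > 0
    have hu : 0 < (1 - c) * x := mul_pos (by linarith) hx0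
    have huv : (1 - c) * x < (1 + c) * x := by nlinarith
    have hv : (1 + c) * x ≤ π := by nlinarith [Real.pi_pos]
    have key := sin_ratio_aux hu huv hv
    have e1 : Real.sin ((1 - c) * x) = Real.sin x * Real.cos (c * x)
        - Real.cos x * Real.sin (c * x) := by
      rw [show (1 - c) * x = x - c * x by ring, Real.sin_sub]
    have e2 : Real.sin ((1 + c) * x) = Real.sin x * Real.cos (c * x)
        + Real.cos x * Real.sin (c * x) := by
      rw [show (1 + c) * x = x + c * x by ring, Real.sin_add]
    rw [e1, e2] at key
    nlinarith [key, hx0]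

theorem burning_sphere_reductio (δ₁ δ₂ e₁ e₂ : ℝ)
    (hδ₁ : 0 < δ₁) (hδ : δ₁ < δ₂) (he₁ : 0 < e₁) (he : e₁ < e₂)
    (he₁δ₁ : e₁ < δ₁) (he₂δ₂ : e₂ < δ₂) (hsum : δ₁ + δ₂ ≤ π / 2)
    (hratio : e₂ / δ₂ < e₁ / δ₁) :
    Real.sin (δ₂ + δ₁) / Real.sin (δ₂ - δ₁) < Real.sin (e₂ + e₁) / Real.sin (e₂ - e₁) := by
  set d := e₂ - e₁ with hd_def
  set s := e₂ + e₁ with hs_def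
  set D := δ₂ - δ₁ with hD_def
  set S := δ₂ + δ₁ with hS_def
  have hd0 : 0 < d := by simp [hd_def]; linarith
  have hs0 : 0 < s := by simp [hs_def]; linarith
  have hD0 : 0 < D := by simp [hD_def]; linarith
  have hS0 : 0 < S := by simp [hS_def]; linarith
  have hDS : D < S := by simp [hD_def, hS_def]; linarith
  have hsS : s < S := by simp [hs_def, hS_def]; linarith
  have hSle : S ≤ π / 2 := by simp [hS_def]; linarith
  have hDle : D ≤ π / 2 := by linarith
  have hcross : e₂ * δ₁ < e₁ * δ₂ := by
    have := (div_lt_div_iff₀ (by linarith : (0:ℝ) < δ₂) hδ₁).1 hratio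
    linarith
  have hdSsD : d * S < s * D := by
    simp only [hd_def, hs_def, hD_def, hS_def]
    nlinarith
  -- c := s / S ∈ (0,1)
  set c := s / S with hc_def
  have hc0 : 0 < c := div_pos hs0 hS0
  have hc1 : c < 1 := (div_lt_one hS0).2 hsS
  have hcS : c * S = s := by rw [hc_def]; exact div_mul_cancel₀ s hS0.ne'
  have hdcD : d < c * D := by
    rw [hc_def, div_mul_eq_mul_div, lt_div_iff₀ hS0]
    linarith
  have hπ : 0 < π := Real.pi_pos
  -- all four angles in (0, π), so sines are positive
  have hsd : 0 < Real.sin d := Real.sin_pos_of_pos_of_lt_pi hd0 (by linarith)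
  have hss : 0 < Real.sin s := Real.sin_pos_of_pos_of_lt_pi hs0 (by linarith)
  have hsD : 0 < Real.sin D := Real.sin_pos_of_pos_of_lt_pi hD0 (by linarith)
  have hsS' : 0 < Real.sin S := Real.sin_pos_of_pos_of_lt_pi hS0 (by linarith)
  rw [div_lt_div_iff₀ hsD hsd]
  -- goal : sin S * sin d < sin s * sin D
  have hcD0 : 0 < c * D := mul_pos hc0 hD0
  have hcDle : c * D < π / 2 := lt_of_lt_of_le (by nlinarith) hDle
  -- step 1 : sin d < sin (c * D)
  have step1 : Real.sin d < Real.sin (c * D) :=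
    Real.sin_lt_sin_of_lt_of_le_pi_div_two (by linarith) hcDle.le hdcD
  -- step 2 : sin (c*D) / sin D < sin (c*S) / sin S
  have step2 : Real.sin (c * D) / Real.sin D < Real.sin (c * S) / Real.sin S :=
    sin_ratio_strictMono hc0 hc1 ⟨hD0, hDle⟩ ⟨hS0, hSle⟩ hDS
  rw [hcS, div_lt_div_iff₀ hsD hsS'] at step2
  nlinarith [step1, step2, hsS', hsD]
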